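/- Let α ∈ (0,1) and let a_X < b_X and a_Y < b_Y be reals. Then the α-cut uniform measure U_α[a_X, b_X] second-order stochastically dominates U_α[a_Y, b_Y] if and only if a_X ≥ a_Y and (2−α)·b_X + α·a_X ≥ (2−α)·b_Y + α·a_Y. -/

import Mathlib

open MeasureTheory ProbabilityTheory
open scoped NNReal ENNReal

/-- `P` second-order stochastically dominates `Q`. -/
def SSD (P Q : Measure ℝ) : Prop :=
  ∀ u : ℝ, (∫ z in Set.Iic u, (cdf P z - cdf Q z)) ≤ 0

/-- The uniform probability measure on the interval `[a, b]`. -/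
noncomputable def unif (a b : ℝ) : Measure ℝ :=
  (ENNReal.ofReal (b - a))⁻¹ • (volume.restrict (Set.Icc a b))

/-- The `α`-cut uniform measure `U_α[a, b] = α·Unif[a,b] + (1−α)·δ_b`. -/
noncomputable def alphaCutUnif (α a b : ℝ) : Measure ℝ :=
  ENNReal.ofReal α • unif a b + ENNReal.ofReal (1 - α) • Measure.dirac b

/- ## Auxiliary definitions and lemmas -/

noncomputable def acuCdf (α a b : ℝ) : ℝ → ℝ :=
  fun x => if x < b then max 0 (α * ((x - a) / (b - a))) else 1

noncomputable def acuInt (α a b : ℝ) : ℝ → ℝ := fun u =>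
  if u ≤ a then 0 else if u ≤ b then α * (u - a)^2 / (2 * (b - a))
  else α * (b - a) / 2 + (u - b)

lemma unif_Iic (a b x : ℝ) (h : a < b) :
    unif a b (Set.Iic x) = ENNReal.ofReal ((min x b - a) / (b - a)) := by
  rw [unif, Measure.smul_apply, Measure.restrict_apply measurableSet_Iic]
  have : Set.Iic x ∩ Set.Icc a b = Set.Icc a (min x b) := by
    ext z; simp [le_min_iff]; tauto
  rw [this, Real.volume_Icc, ENNReal.ofReal_div_of_pos (by linarith), smul_eq_mul,
    div_eq_mul_inv, mul_comm]

lemma acu_prob (α a b : ℝ) (hα0 : 0 ≤ α) (hα1 : α ≤ 1) (h : a < b) :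
    IsProbabilityMeasure (alphaCutUnif α a b) := by
  constructor
  have hba : (0:ℝ) < b - a := by linarith
  rw [alphaCutUnif, Measure.add_apply, Measure.smul_apply, Measure.smul_apply, unif,
    Measure.smul_apply, Measure.restrict_apply_univ, Real.volume_Icc, smul_eq_mul,
    smul_eq_mul, smul_eq_mul, ENNReal.inv_mul_cancel (by simp; linarith) (by simp),
    Measure.dirac_apply_of_mem (Set.mem_univ b), mul_one, mul_one,
    ← ENNReal.ofReal_add hα0 (by linarith)]
  norm_num

lemma acu_cdf (α a b : ℝ) (hα0 : 0 ≤ α) (hα1 : α ≤ 1) (h : a < b) (x : ℝ) :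
    cdf (alphaCutUnif α a b) x = acuCdf α a b x := by
  haveI := acu_prob α a b hα0 hα1 h
  rw [cdf_eq_real, measureReal_def]
  rw [alphaCutUnif, Measure.add_apply, Measure.smul_apply, Measure.smul_apply,
    unif_Iic a b x h, Measure.dirac_apply, smul_eq_mul, smul_eq_mul]
  rcases lt_or_ge x b with hx | hx
  · rw [Set.indicator_of_notMem (by simpa using hx.not_ge), mul_zero, add_zero,
      min_eq_left hx.le, ← ENNReal.ofReal_mul hα0]
    rw [acuCdf, if_pos hx]
    rcases le_total 0 (α * ((x - a) / (b - a))) with h0 | h0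
    · rw [ENNReal.toReal_ofReal h0, max_eq_right h0]
    · rw [ENNReal.ofReal_eq_zero.mpr h0, ENNReal.toReal_zero, max_eq_left h0]
  · rw [Set.indicator_of_mem (by simpa using hx) 1, min_eq_right hx,
      div_self (by linarith : b - a ≠ 0),
      ENNReal.ofReal_one, mul_one, Pi.one_apply, mul_one,
      ← ENNReal.ofReal_add hα0 (by linarith)]
    rw [acuCdf, if_neg (not_lt.mpr hx)]
    norm_num

lemma acuCdf_meas (α a b : ℝ) : Measurable (acuCdf α a b) := by
  unfold acuCdf
  exact Measurable.ite measurableSet_Iio (by fun_prop) measurable_const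

lemma acuCdf_nonneg (α a b : ℝ) (x : ℝ) : 0 ≤ acuCdf α a b x := by
  unfold acuCdf; split <;> simp

lemma acuCdf_le_one (α a b : ℝ) (hα0 : 0 ≤ α) (hα1 : α ≤ 1) (h : a < b) (x : ℝ) :
    acuCdf α a b x ≤ 1 := by
  unfold acuCdf; split
  · rename_i hx
    have hba : (0:ℝ) < b - a := by linarith
    have h1 : (x - a) / (b - a) ≤ 1 := by rw [div_le_one hba]; linarith
    have h2 : α * ((x - a) / (b - a)) ≤ 1 := by nlinarith
    simp [h2]
  · exact le_refl _

lemma acuCdf_zero_on (α a b : ℝ) (hα0 : 0 ≤ α) (h : a < b) (x : ℝ) (hx : x ≤ a) :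
    acuCdf α a b x = 0 := by
  unfold acuCdf
  rw [if_pos (by linarith)]
  have h1 : (x - a) / (b - a) ≤ 0 := div_nonpos_iff.mpr (Or.inr ⟨by linarith, by linarith⟩)
  have := mul_nonpos_of_nonneg_of_nonpos hα0 h1
  simp [max_eq_left this]

lemma acuCdf_one_on (α a b : ℝ) (x : ℝ) (hx : b ≤ x) : acuCdf α a b x = 1 := by
  unfold acuCdf; rw [if_neg (not_lt.mpr hx)]

lemma acuCdf_integrableOn (α a b u : ℝ) (hα0 : 0 ≤ α) (hα1 : α ≤ 1) (h : a < b) :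
    IntegrableOn (acuCdf α a b) (Set.Iic u) := by
  rcases le_or_gt u a with hu | hu
  · apply (integrableOn_congr_fun
      (fun x hx => (acuCdf_zero_on α a b hα0 h x (le_trans hx hu)).symm)
      measurableSet_Iic).mp
    exact integrableOn_zero
  · rw [← Set.Iic_union_Ioc_eq_Iic hu.le]
    apply IntegrableOn.union
    · apply (integrableOn_congr_fun
        (fun x hx => (acuCdf_zero_on α a b hα0 h x hx).symm) measurableSet_Iic).mp
      exact integrableOn_zero
    · refine Measure.integrableOn_of_bounded (M := 1) ?_
        ((acuCdf_meas α a b).aestronglyMeasurable) ?_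
      · rw [Real.volume_Ioc]; exact ENNReal.ofReal_ne_top
      · filter_upwards with x
        rw [Real.norm_eq_abs, abs_of_nonneg (acuCdf_nonneg α a b x)]
        exact acuCdf_le_one α a b hα0 hα1 h x

lemma acuCdf_ramp_integral (α a b u : ℝ) (h : a < b) (h1 : a ≤ u) (h2 : u ≤ b)
    (hα0 : 0 ≤ α) :
    ∫ x in a..u, acuCdf α a b x = α * (u - a)^2 / (2 * (b - a)) := by
  have hba : (0:ℝ) < b - a := by linarith
  rw [intervalIntegral.integral_of_le h1, integral_Ioc_eq_integral_Ioo]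
  have heq : ∀ x ∈ Set.Ioo a u, acuCdf α a b x = α / (b - a) * (x - a) := by
    intro x hx
    have hx1 : a < x := hx.1
    have hx2 : x < u := hx.2
    rw [acuCdf, if_pos (by linarith),
      max_eq_right (mul_nonneg hα0 (div_nonneg (by linarith) hba.le))]
    ring
  rw [setIntegral_congr_fun measurableSet_Ioo heq, ← integral_Ioc_eq_integral_Ioo,
    ← intervalIntegral.integral_of_le h1]
  rw [intervalIntegral.integral_const_mul]
  have : ∫ x in a..u, (x - a) = (u - a)^2/2 := by
    rw [intervalIntegral.integral_sub intervalIntegral.intervalIntegrable_id (intervalIntegrable_const),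
      integral_id, intervalIntegral.integral_const, smul_eq_mul]
    ring
  have hne : b - a ≠ 0 := ne_of_gt hba
  rw [this]; field_simp

lemma acuCdf_setIntegral (α a b u : ℝ) (hα0 : 0 ≤ α) (hα1 : α ≤ 1) (h : a < b) :
    ∫ z in Set.Iic u, acuCdf α a b z = acuInt α a b u := by
  rcases le_or_gt u a with hu | hu
  · rw [setIntegral_congr_fun measurableSet_Iic
      (fun x hx => acuCdf_zero_on α a b hα0 h x (le_trans hx hu)),
      integral_zero, acuInt, if_pos hu]
  · have hIa : IntegrableOn (acuCdf α a b) (Set.Iic a) :=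
      acuCdf_integrableOn α a b a hα0 hα1 h
    have hIoc : IntegrableOn (acuCdf α a b) (Set.Ioc a u) :=
      (acuCdf_integrableOn α a b u hα0 hα1 h).mono_set Set.Ioc_subset_Iic_self
    have hsplit : ∫ z in Set.Iic u, acuCdf α a b z = ∫ z in a..u, acuCdf α a b z := by
      rw [← Set.Iic_union_Ioc_eq_Iic hu.le,
        setIntegral_union (Set.Iic_disjoint_Ioc le_rfl) measurableSet_Ioc hIa hIoc,
        setIntegral_congr_fun measurableSet_Iic
          (fun x hx => acuCdf_zero_on α a b hα0 h x hx),
        integral_zero, zero_add, intervalIntegral.integral_of_le hu.le]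
    rw [hsplit]
    rcases le_or_gt u b with hub | hub
    · rw [acuCdf_ramp_integral α a b u h hu.le hub hα0, acuInt,
        if_neg (not_le.mpr hu), if_pos hub]
    · have hib : IntervalIntegrable (acuCdf α a b) volume a b := by
        rw [intervalIntegrable_iff_integrableOn_Ioc_of_le h.le]
        exact hIoc.mono_set (Set.Ioc_subset_Ioc le_rfl hub.le)
      have hibu : IntervalIntegrable (acuCdf α a b) volume b u := by
        rw [intervalIntegrable_iff_integrableOn_Ioc_of_le hub.le]
        exact hIoc.mono_set (Set.Ioc_subset_Ioc h.le le_rfl)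
      rw [← intervalIntegral.integral_add_adjacent_intervals hib hibu,
        acuCdf_ramp_integral α a b b h h.le le_rfl hα0]
      have : ∫ x in b..u, acuCdf α a b x = u - b := by
        rw [intervalIntegral.integral_congr
          (g := fun _ => (1:ℝ)) (fun x hx => by
            rw [Set.uIcc_of_le hub.le] at hx
            exact acuCdf_one_on α a b x hx.1),
          intervalIntegral.integral_const, smul_eq_mul, mul_one]
      rw [this, acuInt, if_neg (not_le.mpr hu), if_neg (not_le.mpr hub)]
      have hne : b - a ≠ 0 := by linarith
      field_simp

lemma acuInt_nonneg (α a b u : ℝ) (hα0 : 0 ≤ α) (h : a < b) : 0 ≤ acuInt α a b u := by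
  unfold acuInt
  split
  · exact le_refl 0
  · rename_i h1
    push_neg at h1
    split
    · exact div_nonneg (mul_nonneg hα0 (sq_nonneg _)) (by linarith)
    · rename_i h2; push_neg at h2; nlinarith


-- core quadratic inequality
lemma core (α aX bX aY bY u : ℝ) (hα0 : 0 < α) (hα1 : α < 1)
    (hX : aX < bX) (hY : aY < bY) (ha : aY ≤ aX)
    (hM : (2 - α) * bY + α * aY ≤ (2 - α) * bX + α * aX)
    (h1 : aX ≤ u) (h2 : u ≤ bX) (h3 : u ≤ bY) :
    (u - aX)^2 * (bY - aY) ≤ (u - aY)^2 * (bX - aX) := by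
  rcases le_total (bY - aY) (bX - aX) with hL | hL
  · nlinarith [mul_nonneg (sub_nonneg.mpr h1) (sub_nonneg.mpr ha), sq_nonneg (u - aX),
      mul_nonneg (sub_nonneg.mpr ha) (sub_nonneg.mpr ha)]
  · have h2d : (bY - aY) - (bX - aX) ≤ 2*(aX - aY) := by
      rcases le_total bY bX with hb | hb
      · linarith
      · nlinarith [mul_nonneg (by linarith : (0:ℝ) ≤ 1 - α) (by linarith : (0:ℝ) ≤ bY - bX),
          mul_nonneg (by linarith : (0:ℝ) ≤ 1 - α) (by linarith : (0:ℝ) ≤ aX - aY)]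
    nlinarith [mul_nonneg (mul_nonneg (by linarith : (0:ℝ) ≤ bX - aX)
        (by linarith : (0:ℝ) ≤ 2*(aX-aY) - ((bY-aY)-(bX-aX))))
        (by linarith : (0:ℝ) ≤ 4*(u-aX) + 2*(aX-aY) + (bY-aY) - (bX-aX)),
      mul_nonneg (mul_nonneg (by linarith : (0:ℝ) ≤ (bY-aY)-(bX-aX))
        (by linarith : (0:ℝ) ≤ u - aX)) (by linarith : (0:ℝ) ≤ bX - u),
      mul_nonneg (by linarith : (0:ℝ) ≤ (bY-aY)-(bX-aX))
        (mul_nonneg (by linarith : (0:ℝ) ≤ bX - aX) (by linarith : (0:ℝ) ≤ (bY-aY)-(bX-aX)))]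

lemma case2 (α aX bX aY bY u : ℝ) (hα0 : 0 < α) (hα1 : α < 1)
    (hX : aX < bX) (hY : aY < bY) (ha : aY ≤ aX)
    (hM : (2 - α) * bY + α * aY ≤ (2 - α) * bX + α * aX)
    (h1 : aX ≤ u) (h2 : u ≤ bX) (h3 : u ≤ bY) :
    α * (u - aX)^2 / (2*(bX - aX)) ≤ α * (u - aY)^2 / (2*(bY - aY)) := by
  rw [div_le_div_iff₀ (by linarith) (by linarith)]
  have hc := core α aX bX aY bY u hα0 hα1 hX hY ha hM h1 h2 h3
  nlinarith [mul_nonneg hα0.le (sub_nonneg.mpr hc)]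

lemma case3 (α aX bX aY bY u : ℝ) (hα0 : 0 < α) (hα1 : α < 1)
    (hX : aX < bX) (hY : aY < bY) (ha : aY ≤ aX)
    (hM : (2 - α) * bY + α * aY ≤ (2 - α) * bX + α * aX)
    (h1 : aX ≤ u) (h2 : u ≤ bX) (h3 : bY ≤ u) :
    α * (u - aX)^2 / (2*(bX - aX)) ≤ α * (bY - aY) / 2 + (u - bY) := by
  rw [div_le_iff₀ (by linarith : (0:ℝ) < 2*(bX - aX))]
  rcases le_total aX bY with hc | hc
  · have hcore := core α aX bX aY bY bY hα0 hα1 hX hY ha hM hc (by linarith) le_rfl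
    -- α(u-aX)^2 ≤ α(bY-aX)^2 + α(u-bY)(u+bY-2aX) ≤ α(bY-aY)(bX-aX)... 
    have hd : α * ((u - bY)*(u + bY - 2*aX)) ≤ 2*(u-bY)*(bX-aX) := by
      have hin : (0:ℝ) ≤ 2*(bX-aX) - α*(u + bY - 2*aX) := by
        nlinarith [mul_nonneg (by linarith : (0:ℝ) ≤ 1 - α)
          (by linarith : (0:ℝ) ≤ u + bY - 2*aX)]
      nlinarith [mul_nonneg (by linarith : (0:ℝ) ≤ u - bY) hin]
    have hca : α * ((bY-aX)^2 * (bY-aY)) ≤ α * ((bY-aY)^2*(bX-aX)) :=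
      mul_le_mul_of_nonneg_left hcore hα0.le
    have hcb : α * (bY-aX)^2 ≤ α * ((bY-aY)*(bX-aX)) := by
      have hpos : (0:ℝ) < bY - aY := by linarith
      rw [← mul_le_mul_iff_of_pos_right hpos]
      nlinarith [hca]
    nlinarith [hd, hcb]
  · -- bY < aX
    have hq : α * (u - aX)^2 ≤ α * (u-aX) * (bX - aX) := by
      nlinarith [mul_nonneg (mul_nonneg hα0.le (by linarith : (0:ℝ) ≤ u - aX))
        (by linarith : (0:ℝ) ≤ bX - u)]
    have hl : α * (u - aX) ≤ α * (bY - aY) + 2*(u - bY) := by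
      nlinarith [mul_nonneg (by linarith : (0:ℝ) ≤ 2 - α) (by linarith : (0:ℝ) ≤ u - aX),
        mul_nonneg hα0.le (by linarith : (0:ℝ) ≤ bY - aY)]
    nlinarith [mul_le_mul_of_nonneg_right hl (by linarith : (0:ℝ) ≤ bX - aX)]

lemma case4 (α aX bX aY bY u : ℝ) (hα0 : 0 < α) (hα1 : α < 1)
    (hX : aX < bX) (hY : aY < bY) (ha : aY ≤ aX)
    (hM : (2 - α) * bY + α * aY ≤ (2 - α) * bX + α * aX)
    (h1 : bX ≤ u) (h3 : u ≤ bY) :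
    α * (bX - aX) / 2 + (u - bX) ≤ α * (u - aY)^2 / (2*(bY - aY)) := by
  rw [le_div_iff₀ (by linarith : (0:ℝ) < 2*(bY - aY))]
  have hin : (0:ℝ) ≤ 2*(bY-aY) - α*(bY + u - 2*aY) := by
    nlinarith [mul_nonneg (by linarith : (0:ℝ) ≤ 1-α)
      (by linarith : (0:ℝ) ≤ bY + u - 2*aY)]
  nlinarith [mul_nonneg (by linarith : (0:ℝ) ≤ bY - u) hin,
    mul_nonneg (by linarith : (0:ℝ) ≤ bY - aY)
      (by linarith : (0:ℝ) ≤ ((2-α)*bX + α*aX) - ((2-α)*bY + α*aY))]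

lemma acuInt_key (α aX bX aY bY : ℝ) (hα : α ∈ Set.Ioo (0 : ℝ) 1)
    (hX : aX < bX) (hY : aY < bY) :
    (∀ u, acuInt α aX bX u ≤ acuInt α aY bY u) ↔
      aY ≤ aX ∧ (2 - α) * bY + α * aY ≤ (2 - α) * bX + α * aX := by
  obtain ⟨hα0, hα1⟩ := hα
  constructor
  · intro h
    constructor
    · by_contra hc
      push_neg at hc
      have hu : aX < min aY bX := lt_min hc hX
      have := h (min aY bX)
      rw [acuInt, acuInt] at this
      simp only [if_neg (not_le.mpr hu), if_pos (min_le_right aY bX),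
        if_pos (min_le_left aY bX)] at this
      have hpos : 0 < α * (min aY bX - aX)^2 / (2*(bX - aX)) := by
        apply div_pos
        · exact mul_pos hα0 (pow_pos (by linarith) 2)
        · linarith
      linarith
    · have := h (max bX bY + 1)
      rw [acuInt, acuInt] at this
      have hx1 : ¬ (max bX bY + 1 ≤ aX) := by
        push_neg; have := le_max_left bX bY; linarith
      have hx2 : ¬ (max bX bY + 1 ≤ bX) := by
        push_neg; have := le_max_left bX bY; linarith
      have hy1 : ¬ (max bX bY + 1 ≤ aY) := by
        push_neg; have := le_max_right bX bY; linarith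
      have hy2 : ¬ (max bX bY + 1 ≤ bY) := by
        push_neg; have := le_max_right bX bY; linarith
      simp only [if_neg hx1, if_neg hx2, if_neg hy1, if_neg hy2] at this
      linarith
  · rintro ⟨ha, hM⟩ u
    rw [acuInt, acuInt]
    split_ifs with h1 h2 h3 h4 h5 h6 h7 h8
    · exact le_refl 0
    · push_neg at h2
      exact div_nonneg (mul_nonneg hα0.le (sq_nonneg _)) (by linarith)
    · push_neg at h2 h3
      nlinarith [mul_pos hα0 (by linarith : (0:ℝ) < bY - aY)]
    · push_neg at h1; linarith
    · push_neg at h1 h5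
      exact case2 α aX bX aY bY u hα0 hα1 hX hY ha hM h1.le h4 h6
    · push_neg at h1 h5 h6
      exact case3 α aX bX aY bY u hα0 hα1 hX hY ha hM h1.le h4 h6.le
    · push_neg at h1 h4; linarith
    · push_neg at h1 h4 h7
      exact case4 α aX bX aY bY u hα0 hα1 hX hY ha hM h4.le h8
    · push_neg at h1 h4 h7 h8; linarith


theorem ssd_alphaCutUnif_iff (α aX bX aY bY : ℝ) (hα : α ∈ Set.Ioo (0 : ℝ) 1)
    (hX : aX < bX) (hY : aY < bY) :
    SSD (alphaCutUnif α aX bX) (alphaCutUnif α aY bY) ↔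
      aY ≤ aX ∧ (2 - α) * bY + α * aY ≤ (2 - α) * bX + α * aX := by
  obtain ⟨hα0, hα1⟩ := hα
  have key : ∀ u : ℝ, (∫ z in Set.Iic u,
      (cdf (alphaCutUnif α aX bX) z - cdf (alphaCutUnif α aY bY) z))
      = acuInt α aX bX u - acuInt α aY bY u := by
    intro u
    have hcongr : ∀ z ∈ Set.Iic u,
        cdf (alphaCutUnif α aX bX) z - cdf (alphaCutUnif α aY bY) z
          = acuCdf α aX bX z - acuCdf α aY bY z := by
      intro z _
      rw [acu_cdf α aX bX hα0.le hα1.le hX z, acu_cdf α aY bY hα0.le hα1.le hY z]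
    rw [setIntegral_congr_fun measurableSet_Iic hcongr,
      integral_sub (acuCdf_integrableOn α aX bX u hα0.le hα1.le hX)
        (acuCdf_integrableOn α aY bY u hα0.le hα1.le hY),
      acuCdf_setIntegral α aX bX u hα0.le hα1.le hX,
      acuCdf_setIntegral α aY bY u hα0.le hα1.le hY]
  unfold SSD
  rw [← acuInt_key α aX bX aY bY ⟨hα0, hα1⟩ hX hY]
  constructor
  · intro h u; have := h u; rw [key u] at this; linarith
  · intro h u; rw [key u]; linarith [h u]
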